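/- Let M be a matroid of rank r on an n-element linearly ordered set E. The augmented external activity complex Δ_M, with ground set {x_e, y_e, z_e : e ∈ E} and one facet F(I) = x_{I ∪ EP(I)} y_Y z_{I ∪ EA(I)} for each independent set I = B \ Y (B a basis, Y ⊆ IA(B)), is a pure simplicial complex of dimension n + r − 1. -/

import Mathlib

open Set

variable {α : Type*}

/-- A circuit of a matroid: a minimal dependent set. -/
def Matroid.Cct (M : Matroid α) (C : Set α) : Prop :=
  M.Dep C ∧ ∀ D ⊂ C, ¬ M.Dep D

/-- The externally active elements with respect to `S`: elements `e ∈ E \ S` that are the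
maximum of some circuit contained in `S ∪ {e}`. -/
def Matroid.exA [LinearOrder α] (M : Matroid α) (S : Set α) : Set α :=
  {e | e ∈ M.E \ S ∧ ∃ C, M.Cct C ∧ C ⊆ insert e S ∧ ∀ f ∈ C, f ≤ e}

/-- The externally passive elements with respect to `S`. -/
def Matroid.exP [LinearOrder α] (M : Matroid α) (S : Set α) : Set α :=
  (M.E \ S) \ M.exA S

/-- The internally active elements with respect to `S`: elements of `S` that are externally
active with respect to `E \ S` in the dual matroid. -/
def Matroid.inA [LinearOrder α] (M : Matroid α) (S : Set α) : Set α :=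
  {i | i ∈ S ∧ i ∈ M✶.exA (M.E \ S)}

/-- The internally passive elements with respect to `S`. -/
def Matroid.inP [LinearOrder α] (M : Matroid α) (S : Set α) : Set α :=
  S \ M.inA S

/-- `I` is internally related to the basis `B` if `I = B \ Y` for some `Y ⊆ IA(B)`. -/
def Matroid.IntRelated [LinearOrder α] (M : Matroid α) (I B : Set α) : Prop :=
  M.IsBase B ∧ ∃ Y ⊆ M.inA B, I = B \ Y

/-- The external/internal order on independent sets. -/
def Matroid.extIntLE [LinearOrder α] (M : Matroid α) (I J : Set α) : Prop :=
  ((∃ B, M.IntRelated I B ∧ M.IntRelated J B) ∧ I ⊆ J) ∨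
  ((¬ ∃ B, M.IntRelated I B ∧ M.IntRelated J B) ∧
    (I \ M.inA I) ∪ M.exA I ⊆ (J \ M.inA J) ∪ M.exA J)

/-- The augmented external activity complex is pure of dimension `n + r - 1`: each facet
`F(I) = x_{I ∪ EP(I)} y_Y z_{I ∪ EA(I)}` has cardinality `n + r`. -/
theorem augmented_complex_pure [LinearOrder α] (M : Matroid α) [M.Finite]
    (n r : ℕ) (hn : M.E.ncard = n) (hr : ∀ B, M.IsBase B → B.ncard = r)
    (B Y I : Set α) (hB : M.IsBase B) (hY : Y ⊆ M.inA B) (hI : I = B \ Y) :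
    (((I ∪ M.exP I) ×ˢ ({0} : Set (Fin 3))) ∪ (Y ×ˢ ({1} : Set (Fin 3))) ∪
      ((I ∪ M.exA I) ×ˢ ({2} : Set (Fin 3)))).ncard = n + r := by
  have hground : M.E.Finite := M.ground_finite
  have hBE : B ⊆ M.E := hB.subset_ground
  have hIE : I ⊆ M.E := by rw [hI]; exact diff_subset.trans hBE
  have hYB : Y ⊆ B := fun a ha => (hY ha).1
  have hAsub : M.exA I ⊆ M.E \ I := fun e he => he.1
  have hPsub : M.exP I ⊆ M.E \ I := diff_subset
  have hIfin : I.Finite := hground.subset hIE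
  have hYfin : Y.Finite := hground.subset (hYB.trans hBE)
  have hPfin : (M.exP I).Finite := hground.subset (hPsub.trans diff_subset)
  have hAfin : (M.exA I).Finite := hground.subset (hAsub.trans diff_subset)
  have prodcard : ∀ (S : Set α) (i : Fin 3),
      (S ×ˢ ({i} : Set (Fin 3))).ncard = S.ncard := by
    intro S i
    have h : S ×ˢ ({i} : Set (Fin 3)) = (fun e => (e, i)) '' S := by
      ext ⟨a, b⟩
      simp [Set.mem_prod, eq_comm, and_comm]
    rw [h, Set.ncard_image_of_injective]
    intro a b hab
    simpa using congrArg Prod.fst hab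
  have d12 : Disjoint ((I ∪ M.exP I) ×ˢ ({0} : Set (Fin 3))) (Y ×ˢ ({1} : Set (Fin 3))) := by
    rw [Set.disjoint_left]
    rintro ⟨a, b⟩ ⟨_, hb⟩ ⟨_, hb'⟩
    simp only [Set.mem_singleton_iff] at hb hb'
    exact absurd (hb ▸ hb') (by decide)
  have d13 : Disjoint (((I ∪ M.exP I) ×ˢ ({0} : Set (Fin 3))) ∪ (Y ×ˢ ({1} : Set (Fin 3))))
      ((I ∪ M.exA I) ×ˢ ({2} : Set (Fin 3))) := by
    rw [Set.disjoint_left]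
    rintro ⟨a, b⟩ hab ⟨_, hb'⟩
    simp only [Set.mem_singleton_iff] at hb'
    rcases hab with ⟨_, hb⟩ | ⟨_, hb⟩ <;>
      simp only [Set.mem_singleton_iff] at hb <;>
      exact absurd (hb ▸ hb') (by decide)
  have f1 : (((I ∪ M.exP I)) ×ˢ ({0} : Set (Fin 3))).Finite :=
    (hIfin.union hPfin).prod (Set.finite_singleton _)
  have f2 : (Y ×ˢ ({1} : Set (Fin 3))).Finite := hYfin.prod (Set.finite_singleton _)
  have f3 : (((I ∪ M.exA I)) ×ˢ ({2} : Set (Fin 3))).Finite :=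
    (hIfin.union hAfin).prod (Set.finite_singleton _)
  rw [Set.ncard_union_eq d13 (f1.union f2) f3, Set.ncard_union_eq d12 f1 f2,
    prodcard, prodcard, prodcard]
  -- now pure set arithmetic
  have hAunion : (I ∪ M.exP I) ∪ (I ∪ M.exA I) = M.E := by
    rw [Set.union_union_union_comm, Set.union_self, Matroid.exP,
      Set.diff_union_of_subset hAsub, Set.union_diff_cancel hIE]
  have hAinter : (I ∪ M.exP I) ∩ (I ∪ M.exA I) = I := by
    rw [← Set.union_inter_distrib_left]
    have : M.exP I ∩ M.exA I = ∅ := by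
      rw [Matroid.exP]
      exact Set.diff_inter_self
    rw [this, Set.union_empty]
  have key := Set.ncard_union_add_ncard_inter (I ∪ M.exP I) (I ∪ M.exA I)
    (hIfin.union hPfin) (hIfin.union hAfin)
  rw [hAunion, hAinter, hn] at key
  have hIY : I.ncard + Y.ncard = r := by
    rw [hI, Set.ncard_diff_add_ncard_of_subset hYB (hground.subset hBE)]
    exact hr B hB
  omega
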